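/- Let v_1, ..., v_n ≥ 0 and let R be a random subset of [n]. Define α := min over nonempty S ⊆ [n] with ∑_{i∈S} v_i > 0 of P[R ∩ S ≠ ∅] / ∑_{i∈S} v_i. Then there exist conditional probabilities p_{i,S} ≥ 0 with p_{i,S} = 0 when i ∉ S and ∑_i p_{i,S} ≤ 1 for all S, such that ∑_{S} P[R = S] · p_{i,S} ≥ α · v_i for every i ∈ [n]. -/

import Mathlib

open Finset Pointwise

lemma foldMaxCases {β : Type*} [DecidableEq β] (s : Finset β) (f : β → ℝ) (b : ℝ) :
    s.fold max b f = b ∨ ∃ x ∈ s, s.fold max b f = f x := by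
  induction s using Finset.induction_on with
  | empty => exact Or.inl rfl
  | insert a s h ih =>
    rw [Finset.fold_insert h]
    rcases le_total (f a) (s.fold max b f) with hle | hle
    · rw [max_eq_right hle]
      rcases ih with h1 | ⟨x, hx, h2⟩
      · exact Or.inl h1
      · exact Or.inr ⟨x, Finset.mem_insert_of_mem hx, h2⟩
    · rw [max_eq_left hle]
      exact Or.inr ⟨a, Finset.mem_insert_self a s, rfl⟩

lemma layered (n : ℕ) (d : Fin n → ℝ) (s : Finset (Fin n) → ℝ)
    (hs : ∀ T, 0 ≤ s T)
    (hcut : ∀ A : Finset (Fin n), ∑ i ∈ A, d i ≤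
      ∑ T ∈ univ.filter (fun T : Finset (Fin n) => (T ∩ A).Nonempty), s T) :
    ∀ y : Fin n → ℝ, (∀ i, 0 ≤ y i) →
      ∑ i, y i * d i ≤ ∑ T : Finset (Fin n), s T * T.fold max 0 y := by
  classical
  suffices H : ∀ (N : ℕ) (y : Fin n → ℝ), (∀ i, 0 ≤ y i) →
      ((univ.image y).filter (fun r => 0 < r)).card ≤ N →
      ∑ i, y i * d i ≤ ∑ T : Finset (Fin n), s T * T.fold max 0 y by
    exact fun y hy => H _ y hy le_rfl
  intro N
  induction N with
  | zero =>
    intro y hy hcard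
    have hzero : ∀ i, y i = 0 := by
      intro i
      by_contra h
      have hpos : 0 < y i := lt_of_le_of_ne (hy i) (Ne.symm h)
      have : y i ∈ (univ.image y).filter (fun r => 0 < r) := by
        rw [Finset.mem_filter, Finset.mem_image]
        exact ⟨⟨i, Finset.mem_univ i, rfl⟩, hpos⟩
      have := Finset.card_pos.mpr ⟨_, this⟩
      omega
    have h1 : ∑ i, y i * d i = 0 := by
      apply Finset.sum_eq_zero; intro i _; rw [hzero i, zero_mul]
    rw [h1]
    apply Finset.sum_nonneg
    intro T _
    apply mul_nonneg (hs T)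
    exact (Finset.le_fold_max _).mpr (Or.inl le_rfl)
  | succ N ih =>
    intro y hy hcard
    by_cases hN : ((univ.image y).filter (fun r => 0 < r)).card ≤ N
    · exact ih y hy hN
    -- main step
    set m := (univ : Finset (Fin n)).fold max 0 y with hm
    have hyle : ∀ i, y i ≤ m := fun i =>
      (Finset.le_fold_max _).mpr (Or.inr ⟨i, Finset.mem_univ i, le_rfl⟩)
    have hm0 : 0 < m := by
      have : ∃ r ∈ (univ.image y).filter (fun r => 0 < r), True := by
        have hpos : 0 < ((univ.image y).filter (fun r => 0 < r)).card := by omega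
        obtain ⟨r, hr⟩ := Finset.card_pos.mp hpos
        exact ⟨r, hr, trivial⟩
      obtain ⟨r, hr, -⟩ := this
      rw [Finset.mem_filter, Finset.mem_image] at hr
      obtain ⟨⟨i, -, hi⟩, hrpos⟩ := hr
      calc (0:ℝ) < r := hrpos
        _ = y i := hi.symm
        _ ≤ m := hyle i
    obtain ⟨i0, -, hi0⟩ : ∃ x ∈ (univ : Finset (Fin n)), m = y x := by
      rcases foldMaxCases univ y 0 with h | h
      · exfalso
        rw [← hm] at h
        rw [h] at hm0
        exact lt_irrefl 0 hm0
      · rw [← hm] at h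
        exact h
    set A := univ.filter (fun i => y i = m) with hA
    have hi0A : i0 ∈ A := by simp [hA, hi0.symm]
    set t := (univ.filter (fun i => y i ≠ m)).fold max 0 y with ht
    have ht0 : 0 ≤ t := (Finset.le_fold_max _).mpr (Or.inl le_rfl)
    have htm : t < m := by
      rw [ht]
      rw [Finset.fold_max_lt _]
      refine ⟨hm0, fun x hx => ?_⟩
      rw [Finset.mem_filter] at hx
      exact lt_of_le_of_ne (hyle x) hx.2
    have hyt : ∀ i, i ∉ A → y i ≤ t := by
      intro i hiA
      apply (Finset.le_fold_max _).mpr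
      refine Or.inr ⟨i, ?_, le_rfl⟩
      simp [hA] at hiA
      simp [hiA]
    set y' := fun i => min (y i) t with hy'
    have hy'0 : ∀ i, 0 ≤ y' i := fun i => le_min (hy i) ht0
    have hpoint : ∀ i, y i = y' i + (m - t) * (if i ∈ A then 1 else 0) := by
      intro i
      by_cases hi : i ∈ A
      · simp only [hi, if_pos, mul_one]
        have : y i = m := by simpa [hA] using hi
        rw [this, hy']
        simp only
        rw [this, min_eq_right htm.le]
        ring
      · simp only [hi, if_neg, mul_zero, add_zero, not_false_iff]
        rw [hy']
        simp only
        rw [min_eq_left (hyt i hi)]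
    have hfold : ∀ T : Finset (Fin n),
        T.fold max 0 y = T.fold max 0 y' + (m - t) * (if (T ∩ A).Nonempty then 1 else 0) := by
      intro T
      by_cases hTA : (T ∩ A).Nonempty
      · obtain ⟨j, hj⟩ := hTA
        rw [Finset.mem_inter] at hj
        have hjm : y j = m := by simpa [hA] using hj.2
        have h1 : T.fold max 0 y = m := by
          apply le_antisymm
          · exact (Finset.fold_max_le _).mpr ⟨hm0.le, fun x _ => hyle x⟩
          · exact (Finset.le_fold_max _).mpr (Or.inr ⟨j, hj.1, hjm.ge⟩)
        have h2 : T.fold max 0 y' = t := by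
          apply le_antisymm
          · exact (Finset.fold_max_le _).mpr ⟨ht0, fun x _ => min_le_right _ _⟩
          · refine (Finset.le_fold_max _).mpr (Or.inr ⟨j, hj.1, ?_⟩)
            rw [hy']; simp only
            rw [hjm, min_eq_right htm.le]
        rw [h1, h2, if_pos ⟨j, Finset.mem_inter.mpr hj⟩]
        ring
      · have : ∀ x ∈ T, y x = y' x := by
          intro x hx
          have hxA : x ∉ A := fun hxA => hTA ⟨x, Finset.mem_inter.mpr ⟨hx, hxA⟩⟩
          rw [hy']; simp only
          rw [min_eq_left (hyt x hxA)]
        rw [Finset.fold_congr this, if_neg hTA]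
        ring
    -- measure decreases
    have hsub : (univ.image y').filter (fun r => 0 < r) ⊆
        ((univ.image y).filter (fun r => 0 < r)).erase m := by
      intro r hr
      rw [Finset.mem_filter, Finset.mem_image] at hr
      obtain ⟨⟨i, -, hi⟩, hrpos⟩ := hr
      rw [Finset.mem_erase, Finset.mem_filter, Finset.mem_image]
      rcases le_total (y i) t with hle | hle
      · have hyi : r = y i := by rw [← hi, hy']; simp only; rw [min_eq_left hle]
        refine ⟨?_, ⟨i, Finset.mem_univ i, hyi.symm⟩, hrpos⟩
        rw [hyi]
        exact ne_of_lt (lt_of_le_of_lt hle htm)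
      · have hrt : r = t := by rw [← hi, hy']; simp only; rw [min_eq_right hle]
        rcases foldMaxCases (univ.filter (fun i => y i ≠ m)) y 0 with h0 | ⟨x, hx, hxt⟩
        · exfalso; rw [← ht] at h0; rw [hrt, h0] at hrpos; exact lt_irrefl 0 hrpos
        · rw [← ht] at hxt
          refine ⟨?_, ⟨x, Finset.mem_univ x, by rw [← hxt, ← hrt]⟩, hrpos⟩
          rw [hrt, hxt]
          rw [Finset.mem_filter] at hx
          exact hx.2
    have hmmem : m ∈ (univ.image y).filter (fun r => 0 < r) := by
      rw [Finset.mem_filter, Finset.mem_image]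
      exact ⟨⟨i0, Finset.mem_univ i0, hi0.symm⟩, hm0⟩
    have hcard' : ((univ.image y').filter (fun r => 0 < r)).card ≤ N := by
      have h1 := Finset.card_le_card hsub
      rw [Finset.card_erase_of_mem hmmem] at h1
      omega
    have IH := ih y' hy'0 hcard'
    -- decompose LHS
    have hLHS : ∑ i, y i * d i = ∑ i, y' i * d i + (m - t) * ∑ i ∈ A, d i := by
      have : ∀ i, y i * d i = y' i * d i + (m - t) * (if i ∈ A then d i else 0) := by
        intro i
        rw [hpoint i]
        by_cases hi : i ∈ A <;> simp [hi] <;> ring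
      rw [Finset.sum_congr rfl (fun i _ => this i), Finset.sum_add_distrib]
      rw [← Finset.mul_sum]
      congr 1
      congr 1
      rw [Finset.sum_ite_mem, Finset.univ_inter]
    have hRHS : ∑ T : Finset (Fin n), s T * T.fold max 0 y
        = ∑ T : Finset (Fin n), s T * T.fold max 0 y'
          + (m - t) * ∑ T ∈ univ.filter (fun T : Finset (Fin n) => (T ∩ A).Nonempty), s T := by
      have : ∀ T : Finset (Fin n), s T * T.fold max 0 y
          = s T * T.fold max 0 y' + (m - t) * (if (T ∩ A).Nonempty then s T else 0) := by
        intro T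
        rw [hfold T]
        by_cases hT : (T ∩ A).Nonempty <;> simp [hT] <;> ring
      rw [Finset.sum_congr rfl (fun T _ => this T), Finset.sum_add_distrib]
      rw [← Finset.mul_sum]
      congr 1
      congr 1
      rw [← Finset.sum_filter]
    rw [hLHS, hRHS]
    have hcutA := hcut A
    have hmt : 0 ≤ m - t := by linarith
    nlinarith [mul_le_mul_of_nonneg_left hcutA hmt]


theorem stmt17 (n : ℕ) (v : Fin n → ℝ) (hv : ∀ i, 0 ≤ v i)
    (P : Finset (Fin n) → ℝ) (hP0 : ∀ S, 0 ≤ P S)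
    (hP1 : ∑ S : Finset (Fin n), P S = 1)
    (α : ℝ) (hα0 : 0 ≤ α)
    (hα : ∀ S : Finset (Fin n), S.Nonempty → 0 < ∑ i ∈ S, v i →
      α * ∑ i ∈ S, v i
        ≤ ∑ T ∈ Finset.univ.filter (fun T : Finset (Fin n) => (T ∩ S).Nonempty), P T) :
    ∃ p : Fin n → Finset (Fin n) → ℝ,
      (∀ i S, 0 ≤ p i S) ∧ (∀ i S, i ∉ S → p i S = 0) ∧
      (∀ S : Finset (Fin n), ∑ i, p i S ≤ 1) ∧
      (∀ i, α * v i ≤ ∑ S : Finset (Fin n), P S * p i S) := by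
  classical
  set d : Fin n → ℝ := fun i => α * v i with hd_def
  set F : Set (Fin n → Finset (Fin n) → ℝ) :=
    {f | (∀ i T, 0 ≤ f i T) ∧ (∀ i T, i ∉ T → f i T = 0) ∧ ∀ T, ∑ i, f i T ≤ P T} with hF_def
  suffices hC : ∃ f ∈ F, ∀ i, d i ≤ ∑ T, f i T by
    obtain ⟨f, ⟨hf0, hfs, hfc⟩, hfd⟩ := hC
    refine ⟨fun i T => if P T = 0 then 0 else f i T / P T, ?_, ?_, ?_, ?_⟩
    · intro i T
      by_cases h : P T = 0
      · simp [h]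
      · simp only [h, if_neg, if_false]
        exact div_nonneg (hf0 i T) (hP0 T)
    · intro i T hiT
      by_cases h : P T = 0 <;> simp [h, hfs i T hiT]
    · intro T
      by_cases h : P T = 0
      · simp [h]
      · simp only [h, if_false]
        rw [← Finset.sum_div]
        rw [div_le_one (lt_of_le_of_ne (hP0 T) (Ne.symm h))]
        exact hfc T
    · intro i
      have key : ∀ T, P T * (if P T = 0 then 0 else f i T / P T) = f i T := by
        intro T
        by_cases h : P T = 0
        · simp only [h, if_pos, mul_zero, zero_mul]
          have h1 : f i T ≤ ∑ j, f j T := Finset.single_le_sum (fun j _ => hf0 j T) (Finset.mem_univ i)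
          have h2 : ∑ j, f j T ≤ 0 := h ▸ hfc T
          exact (le_antisymm (h1.trans h2) (hf0 i T)).symm
        · simp only [h, if_false]
          rw [mul_div_cancel₀ _ h]
      calc α * v i = d i := rfl
        _ ≤ ∑ T, f i T := hfd i
        _ = ∑ T, P T * (if P T = 0 then 0 else f i T / P T) := by
            exact (Finset.sum_congr rfl (fun T _ => key T)).symm
  -- Now prove that d is dominated by some flow.
  set L : (Fin n → Finset (Fin n) → ℝ) → (Fin n → ℝ) := fun f i => ∑ T, f i T with hL_def
  set C : Set (Fin n → ℝ) := {x | ∃ f ∈ F, ∀ i, x i ≤ L f i} with hC_def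
  suffices hdC : d ∈ C by
    obtain ⟨f, hfF, hfd⟩ := hdC
    exact ⟨f, hfF, hfd⟩
  by_contra hdC
  -- F is compact
  have hF0 : (fun _ _ => 0 : Fin n → Finset (Fin n) → ℝ) ∈ F := by
    refine ⟨fun _ _ => le_rfl, fun _ _ _ => rfl, fun T => ?_⟩
    simp [hP0 T]
  have hFclosed : IsClosed F := by
    have h1 : IsClosed {f : Fin n → Finset (Fin n) → ℝ | ∀ i T, 0 ≤ f i T} := by
      have : {f : Fin n → Finset (Fin n) → ℝ | ∀ i T, 0 ≤ f i T}
          = ⋂ i, ⋂ T, {f | 0 ≤ f i T} := by ext f; simp [Set.mem_iInter]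
      rw [this]
      exact isClosed_iInter fun i => isClosed_iInter fun T =>
        isClosed_le continuous_const ((continuous_apply T).comp (continuous_apply i))
    have h2 : IsClosed {f : Fin n → Finset (Fin n) → ℝ | ∀ i T, i ∉ T → f i T = 0} := by
      have : {f : Fin n → Finset (Fin n) → ℝ | ∀ i T, i ∉ T → f i T = 0}
          = ⋂ i, ⋂ T, {f | i ∉ T → f i T = 0} := by ext f; simp [Set.mem_iInter]
      rw [this]
      refine isClosed_iInter fun i => isClosed_iInter fun T => ?_
      by_cases hiT : i ∈ T
      · have : {f : Fin n → Finset (Fin n) → ℝ | i ∉ T → f i T = 0} = Set.univ := by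
          ext f; simp [hiT]
        rw [this]; exact isClosed_univ
      · have : {f : Fin n → Finset (Fin n) → ℝ | i ∉ T → f i T = 0} = {f | f i T = 0} := by
          ext f; simp [hiT]
        rw [this]
        exact isClosed_eq ((continuous_apply T).comp (continuous_apply i)) continuous_const
    have h3 : IsClosed {f : Fin n → Finset (Fin n) → ℝ | ∀ T, ∑ i, f i T ≤ P T} := by
      have : {f : Fin n → Finset (Fin n) → ℝ | ∀ T, ∑ i, f i T ≤ P T}
          = ⋂ T, {f | ∑ i, f i T ≤ P T} := by ext f; simp [Set.mem_iInter]
      rw [this]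
      refine isClosed_iInter fun T => isClosed_le ?_ continuous_const
      exact continuous_finset_sum _ fun i _ => (continuous_apply T).comp (continuous_apply i)
    have : F = {f : Fin n → Finset (Fin n) → ℝ | ∀ i T, 0 ≤ f i T}
        ∩ ({f | ∀ i T, i ∉ T → f i T = 0} ∩ {f | ∀ T, ∑ i, f i T ≤ P T}) := by
      ext f; simp only [hF_def, Set.mem_setOf_eq, Set.mem_inter_iff]
    rw [this]
    exact h1.inter (h2.inter h3)
  have hFbdd : Bornology.IsBounded F := by
    rw [isBounded_iff_forall_norm_le]
    refine ⟨1, fun f hf => ?_⟩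
    obtain ⟨hf0, -, hfc⟩ := hf
    rw [pi_norm_le_iff_of_nonneg zero_le_one]
    intro i
    rw [pi_norm_le_iff_of_nonneg zero_le_one]
    intro T
    rw [Real.norm_eq_abs, abs_of_nonneg (hf0 i T)]
    calc f i T ≤ ∑ j, f j T := Finset.single_le_sum (fun j _ => hf0 j T) (Finset.mem_univ i)
      _ ≤ P T := hfc T
      _ ≤ ∑ S, P S := Finset.single_le_sum (fun S _ => hP0 S) (Finset.mem_univ T)
      _ = 1 := hP1
  have hFcomp : IsCompact F := Metric.isCompact_of_isClosed_isBounded hFclosed hFbdd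
  have hLcont : Continuous L := by
    refine continuous_pi fun i => continuous_finset_sum _ fun T _ => ?_
    exact (continuous_apply T).comp (continuous_apply i)
  have hKcomp : IsCompact (L '' F) := hFcomp.image hLcont
  have hNclosed : IsClosed {x : Fin n → ℝ | ∀ i, x i ≤ 0} := by
    have : {x : Fin n → ℝ | ∀ i, x i ≤ 0} = ⋂ i, {x | x i ≤ 0} := by
      ext x; simp [Set.mem_iInter]
    rw [this]
    exact isClosed_iInter fun i => isClosed_le (continuous_apply i) continuous_const
  have hCeq : C = (L '' F) + {x : Fin n → ℝ | ∀ i, x i ≤ 0} := by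
    ext x
    constructor
    · rintro ⟨f, hfF, hfx⟩
      refine Set.mem_add.mpr ⟨L f, ⟨f, hfF, rfl⟩, x - L f, fun i => ?_, by ring⟩
      simp only [Pi.sub_apply]
      linarith [hfx i]
    · intro hx
      obtain ⟨a, ⟨f, hfF, rfl⟩, b, hb, hab⟩ := Set.mem_add.mp hx
      refine ⟨f, hfF, fun i => ?_⟩
      have := congrFun hab i
      simp only [Pi.add_apply] at this
      rw [← this]
      linarith [hb i]
  have hCclosed : IsClosed C := by
    rw [hCeq]
    exact hNclosed.add_left_of_isCompact hKcomp
  have hCconvex : Convex ℝ C := by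
    rintro x ⟨f1, ⟨hf10, hf1s, hf1c⟩, hx⟩ y ⟨f2, ⟨hf20, hf2s, hf2c⟩, hy⟩ a b ha hb hab
    refine ⟨fun i T => a * f1 i T + b * f2 i T, ⟨?_, ?_, ?_⟩, ?_⟩
    · intro i T
      exact add_nonneg (mul_nonneg ha (hf10 i T)) (mul_nonneg hb (hf20 i T))
    · intro i T hiT
      show a * f1 i T + b * f2 i T = 0
      rw [hf1s i T hiT, hf2s i T hiT]; ring
    · intro T
      rw [Finset.sum_add_distrib]
      rw [← Finset.mul_sum, ← Finset.mul_sum]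
      calc a * ∑ i, f1 i T + b * ∑ i, f2 i T
          ≤ a * P T + b * P T :=
            add_le_add (mul_le_mul_of_nonneg_left (hf1c T) ha)
              (mul_le_mul_of_nonneg_left (hf2c T) hb)
        _ = P T := by rw [← add_mul, hab, one_mul]
    · intro i
      simp only [hL_def, Pi.add_apply, Pi.smul_apply, smul_eq_mul]
      rw [Finset.sum_add_distrib, ← Finset.mul_sum, ← Finset.mul_sum]
      exact add_le_add (mul_le_mul_of_nonneg_left (hx i) ha)
        (mul_le_mul_of_nonneg_left (hy i) hb)
  obtain ⟨φ, u, hu1, hu2⟩ := geometric_hahn_banach_closed_point hCconvex hCclosed hdC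
  set y : Fin n → ℝ := fun i => φ (fun j => if i = j then 1 else 0) with hy_def
  have hφ : ∀ x : Fin n → ℝ, φ x = ∑ i, x i * y i := by
    intro x
    conv_lhs => rw [pi_eq_sum_univ x]
    rw [map_sum]
    refine Finset.sum_congr rfl fun i _ => ?_
    rw [map_smul]
    simp [hy_def, smul_eq_mul]
  have hy0 : ∀ i, 0 ≤ y i := by
    intro i
    by_contra hyi
    push_neg at hyi
    set t : ℝ := (|u| + 1) / (-y i) with ht_def
    have ht0 : 0 ≤ t := div_nonneg (by positivity) (by linarith)
    set xt : Fin n → ℝ := fun j => if i = j then -t else 0 with hxt_def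
    have hxtC : xt ∈ C := by
      refine ⟨fun _ _ => 0, hF0, fun j => ?_⟩
      simp only [hL_def, hxt_def]
      rw [Finset.sum_const_zero]
      by_cases h : i = j <;> simp [h] <;> linarith
    have hφxt : φ xt = -t * y i := by
      rw [hφ]
      rw [Finset.sum_congr rfl (fun j _ => by
        show xt j * y j = if i = j then -t * y j else 0
        simp only [hxt_def]
        by_cases h : i = j <;> simp [h])]
      rw [Finset.sum_ite_eq]
      simp
    have h1 := hu1 xt hxtC
    rw [hφxt] at h1
    have hne : -y i ≠ 0 := by linarith
    have h2 : -t * y i = |u| + 1 := by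
      have hdm := div_mul_cancel₀ (|u| + 1) hne
      calc -t * y i = t * (-y i) := by ring
        _ = |u| + 1 := by rw [ht_def]; exact hdm
    rw [h2] at h1
    have := le_abs_self u
    linarith
  -- cut condition
  have hcut : ∀ A : Finset (Fin n), ∑ i ∈ A, d i ≤
      ∑ T ∈ univ.filter (fun T : Finset (Fin n) => (T ∩ A).Nonempty), P T := by
    intro A
    by_cases hApos : 0 < ∑ i ∈ A, v i
    · have hAne : A.Nonempty := by
        rcases Finset.eq_empty_or_nonempty A with rfl | h
        · simp at hApos
        · exact h
      calc ∑ i ∈ A, d i = α * ∑ i ∈ A, v i := by rw [Finset.mul_sum]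
        _ ≤ _ := hα A hAne hApos
    · push_neg at hApos
      have : ∀ i ∈ A, v i = 0 := by
        intro i hi
        have h1 : ∑ j ∈ A, v j = 0 :=
          le_antisymm hApos (Finset.sum_nonneg fun j _ => hv j)
        exact (Finset.sum_eq_zero_iff_of_nonneg fun j _ => hv j).mp h1 i hi
      have h2 : ∑ i ∈ A, d i = 0 := by
        apply Finset.sum_eq_zero
        intro i hi
        simp [hd_def, this i hi]
      rw [h2]
      exact Finset.sum_nonneg fun T _ => hP0 T
  -- layered inequality
  have hlay := layered n d P hP0 hcut y hy0
  -- construct x* achieving sum_T P T * fold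
  set fstar : Fin n → Finset (Fin n) → ℝ := fun i T =>
    if h : ∃ j ∈ T, T.fold max 0 y = y j then (if i = h.choose then P T else 0) else 0
    with hfstar_def
  have hfstarF : fstar ∈ F := by
    refine ⟨?_, ?_, ?_⟩
    · intro i T
      simp only [hfstar_def]
      split
      · split
        · exact hP0 T
        · exact le_rfl
      · exact le_rfl
    · intro i T hiT
      simp only [hfstar_def]
      split
      · rename_i h
        rw [if_neg]
        intro hi
        exact hiT (hi ▸ h.choose_spec.1)
      · rfl
    · intro T
      by_cases h : ∃ j ∈ T, T.fold max 0 y = y j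
      · have : ∀ i, fstar i T = if i = h.choose then P T else 0 := by
          intro i; simp only [hfstar_def, dif_pos h]
        rw [Finset.sum_congr rfl (fun i _ => this i)]
        rw [Finset.sum_ite_eq']
        simp [hP0 T]
      · have : ∀ i, fstar i T = 0 := by
          intro i; simp only [hfstar_def, dif_neg h]
        rw [Finset.sum_congr rfl (fun i _ => this i)]
        simpa using hP0 T
  have hφxstar : φ (L fstar) = ∑ T : Finset (Fin n), P T * T.fold max 0 y := by
    rw [hφ]
    have : ∑ i, L fstar i * y i = ∑ i, ∑ T, fstar i T * y i := by
      refine Finset.sum_congr rfl fun i _ => ?_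
      simp only [hL_def]
      rw [Finset.sum_mul]
    rw [this, Finset.sum_comm]
    refine Finset.sum_congr rfl fun T _ => ?_
    by_cases h : ∃ j ∈ T, T.fold max 0 y = y j
    · have : ∀ i, fstar i T * y i = if i = h.choose then P T * y i else 0 := by
        intro i
        simp only [hfstar_def, dif_pos h]
        by_cases hi : i = h.choose <;> simp [hi]
      rw [Finset.sum_congr rfl (fun i _ => this i)]
      rw [Finset.sum_ite_eq']
      simp only [Finset.mem_univ, if_pos]
      rw [← h.choose_spec.2]
    · have hf0 : T.fold max 0 y = 0 := by
        rcases foldMaxCases T y 0 with h0 | ⟨x, hx, hxe⟩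
        · exact h0
        · exact absurd ⟨x, hx, hxe⟩ h
      have : ∀ i, fstar i T * y i = 0 := by
        intro i; simp only [hfstar_def, dif_neg h, zero_mul]
      rw [Finset.sum_congr rfl (fun i _ => this i)]
      rw [hf0]
      simp
  have hxstarC : L fstar ∈ C := ⟨fstar, hfstarF, fun i => le_rfl⟩
  have h1 := hu1 _ hxstarC
  rw [hφxstar] at h1
  have h2 := hu2
  rw [hφ d] at h2
  have h3 : ∑ i, d i * y i = ∑ i, y i * d i := by
    exact Finset.sum_congr rfl fun i _ => mul_comm _ _
  rw [h3] at h2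
  linarith
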